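/- For every permutation π of length n and every integer 0 ≤ k ≤ n, the 0/1-projection of P(π) at threshold k is obtainable from the 0/1-projection of π at threshold k by one tumble move; that is, P(π)|_k ∈ T(π|_k). -/

import Mathlib

/-- Flip operator `F`: simultaneously reverse every (automatically pairwise disjoint)
`10` factor, i.e. every zero immediately preceded by a one swaps with that one.
Here `false` plays the role of `0` and `true` of `1`. -/
def flipWord : List Bool → List Bool
  | true :: false :: rest => false :: true :: flipWord rest
  | a :: rest => a :: flipWord rest
  | [] => []

/-- The positions (indices) of the zeros (`false`) of a binary word, left to right. -/
def zeroPositions (w : List Bool) : List ℕ :=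
  (List.range w.length).filter (fun i => w.getD i true = false)

/-- `u ⊴ v` : for every `i`, the `i`-th zero of `u` occurs at a position at most
that of the `i`-th zero of `v`. -/
def WLE (u v : List Bool) : Prop :=
  List.Forall₂ (· ≤ ·) (zeroPositions u) (zeroPositions v)

/-- One tumble move: choose pairwise non-overlapping factors of the form `1^+0^+`
covering every `10` factor, and reverse each in place. `Tumble w u` means `u ∈ T(w)`. -/
inductive Tumble : List Bool → List Bool → Prop
  | nil : Tumble [] []
  | zero {w u} : Tumble w u → Tumble (false :: w) (false :: u)
  | one {w u} : Tumble w u → w.head? ≠ some false → Tumble (true :: w) (true :: u)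
  | block {w u} (a b : ℕ) : 0 < a → 0 < b → Tumble w u →
      Tumble (List.replicate a true ++ List.replicate b false ++ w)
             (List.replicate b false ++ List.replicate a true ++ u)

/-- `TumbleN t w u` : `u` is reachable from `w` by exactly `t` tumble moves. -/
def TumbleN : ℕ → List Bool → List Bool → Prop
  | 0 => Eq
  | t + 1 => fun w u => ∃ v, TumbleN t w v ∧ Tumble v u

/-- The 0/1 projection at threshold `k`: the `i`-th letter is `0` iff `w(i) < k`. -/
def proj (k : ℕ) (w : List ℕ) : List Bool := w.map (fun x => decide (k ≤ x))

/-- Pop-stack operator `P`: partition into maximal strictly decreasing runs and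
reverse each run in place. -/
def popStack (w : List ℕ) : List ℕ :=
  ((w.splitBy (fun a b => decide (b < a))).map List.reverse).flatten

lemma tumble_rep_false {w u : List Bool} (b : ℕ) (h : Tumble w u) :
    Tumble (List.replicate b false ++ w) (List.replicate b false ++ u) := by
  induction b with
  | zero => simpa using h
  | succ b ih => simpa [List.replicate_succ] using Tumble.zero ih

lemma tumble_rep_true {w u : List Bool} (a : ℕ) (h : Tumble w u)
    (hw : w.head? ≠ some false) :
    Tumble (List.replicate a true ++ w) (List.replicate a true ++ u) := by
  induction a with
  | zero => simpa using h
  | succ a ih =>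
    simp only [List.replicate_succ, List.cons_append]
    refine Tumble.one ih ?_
    cases a with
    | zero => simpa using hw
    | succ a => simp [List.replicate_succ]

lemma proj_decr (k : ℕ) (c : List ℕ) (hc : c.Chain' (fun a b => b < a)) :
    ∃ a b, proj k c = List.replicate a true ++ List.replicate b false ∧
      a + b = c.length ∧ (0 < a → ∃ h : c ≠ [], k ≤ c.head h) := by
  induction c with
  | nil => exact ⟨0, 0, by simp [proj], by simp, by simp⟩
  | cons x c ih =>
    obtain ⟨a, b, hpr, hlen, hhead⟩ := ih hc.tail
    by_cases hx : k ≤ x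
    · refine ⟨a + 1, b, ?_, by simp; omega, fun _ => ⟨by simp, hx⟩⟩
      simp only [proj, List.replicate_succ, List.map_cons] at hpr ⊢
      simp [hpr, hx]
    · have ha : a = 0 := by
        by_contra h0
        obtain ⟨hne, hk⟩ := hhead (Nat.pos_of_ne_zero h0)
        have : c.head hne < x := (List.isChain_cons.mp hc).1 _ (List.head?_eq_head hne)
        omega
      subst ha
      refine ⟨0, b + 1, ?_, by simp; omega, by simp⟩
      simp only [proj, List.replicate_succ, List.map_cons, List.replicate_zero,
        List.nil_append] at hpr ⊢
      simp [hpr, hx]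

lemma all_ge_of_proj_true {k : ℕ} {c : List ℕ} {a : ℕ}
    (h : proj k c = List.replicate a true) : ∀ x ∈ c, k ≤ x := by
  intro x hx
  have : decide (k ≤ x) ∈ proj k c := List.mem_map_of_mem hx
  rw [h] at this
  simpa using List.eq_of_mem_replicate this

lemma main_lemma (k : ℕ) (cs : List (List ℕ))
    (h1 : ∀ c ∈ cs, c ≠ [])
    (h2 : ∀ c ∈ cs, c.Chain' (fun a b => b < a))
    (h3 : cs.Chain' (fun c d => ∀ (hc : c ≠ []) (hd : d ≠ []), c.getLast hc ≤ d.head hd)) :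
    Tumble (proj k cs.flatten) (proj k (cs.map List.reverse).flatten) := by
  induction cs with
  | nil => exact Tumble.nil
  | cons c cs ih =>
    have hcn : c ≠ [] := h1 c (by simp)
    have ihs : Tumble (proj k cs.flatten) (proj k (cs.map List.reverse).flatten) :=
      ih (fun d hd => h1 d (by simp [hd])) (fun d hd => h2 d (by simp [hd])) h3.tail
    obtain ⟨a, b, hpr, hlen, hhead⟩ := proj_decr k c (h2 c (by simp))
    have hrev : proj k c.reverse = List.replicate b false ++ List.replicate a true := by
      have : proj k c.reverse = (proj k c).reverse := List.map_reverse
      rw [this, hpr]; simp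
    simp only [List.map_cons, List.flatten_cons, proj, List.map_append] at *
    rcases Nat.eq_zero_or_pos a with ha | ha
    · subst ha
      rw [hpr, hrev]
      simpa using tumble_rep_false b ihs
    rcases Nat.eq_zero_or_pos b with hb | hb
    · subst hb
      rw [hpr, hrev]
      simp only [List.replicate_zero, List.append_nil, List.nil_append]
      refine tumble_rep_true a ihs ?_
      cases cs with
      | nil => simp
      | cons d ds =>
        have hdn : d ≠ [] := h1 d (by simp)
        have hbd : c.getLast hcn ≤ d.head hdn :=
          (List.isChain_cons.mp h3).1 _ (List.head?_eq_head (by simp [hdn])) hcn hdn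
        have hkc : k ≤ c.getLast hcn := by
          refine all_ge_of_proj_true (a := a) ?_ _ (List.getLast_mem hcn)
          · simpa [proj] using hpr
        have : k ≤ d.head hdn := le_trans hkc hbd
        obtain ⟨y, d', rfl⟩ := List.exists_cons_of_ne_nil hdn
        have hky : k ≤ y := le_trans hkc (by simpa using hbd)
        simp [hky]
    · rw [hpr, hrev]
      exact Tumble.block a b ha hb ihs

/-- For every permutation `π` of length `n` and `0 ≤ k ≤ n`, `P(π)|ₖ ∈ T(π|ₖ)`. -/
theorem stmt7 (n k : ℕ) (π : List ℕ) (h : π.Perm (List.range' 1 n)) (hk : k ≤ n) :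
    Tumble (proj k π) (proj k (popStack π)) := by
  have hflat : (π.splitBy (fun a b => decide (b < a))).flatten = π :=
    List.flatten_splitBy _ _
  have key := main_lemma k (π.splitBy (fun a b => decide (b < a)))
    (fun c hc => List.ne_nil_of_mem_splitBy (r := fun a b => decide (b < a)) hc)
    (fun c hc => (List.isChain_of_mem_splitBy hc).imp (fun hxy => by
      simp_all))
    (((List.isChain_getLast_head_splitBy _ π)).imp (fun {c d} hcd hc hd => by
      obtain ⟨hc', hd', hr⟩ := hcd
      simp only [decide_eq_false_iff_not, not_lt] at hr
      exact hr))
  rw [hflat] at key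
  exact key
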